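/- arXiv:2204.09960 — 5 statements merged into one kernel-verified Lean document; each statement's English description precedes it below -/
import Mathlib

section
/- For every PPLTL formula φ: (i) every occurrence in pnf(φ) of a subformula of the form ϕ₁ S ϕ₂ lies within the scope of a Y operator (i.e., pnf(φ) has proper temporal subformulas appearing only in the scope of Y); and (ii) every subformula of pnf(φ) of the form Y ϕ satisfies ϕ ∈ sub(φ). -/
inductive PPLTL (P : Type) : Type
  | atom : P → PPLTL P
  | neg : PPLTL P → PPLTL P
  | conj : PPLTL P → PPLTL P → PPLTL P
  | yesterday : PPLTL P → PPLTL P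
  | since : PPLTL P → PPLTL P → PPLTL P
  deriving DecidableEq

namespace PPLTL

variable {P : Type}

/-- Satisfaction of a pure-past LTL formula on the trace `τ` at instant `i`. -/
def Sat (τ : ℕ → Set P) : PPLTL P → ℕ → Prop
  | atom p, i => p ∈ τ i
  | neg φ, i => ¬ Sat τ φ i
  | conj φ ψ, i => Sat τ φ i ∧ Sat τ ψ i
  | yesterday φ, i => 1 ≤ i ∧ Sat τ φ (i - 1)
  | since φ ψ, i => ∃ k, k ≤ i ∧ Sat τ ψ k ∧ ∀ j, k < j → j ≤ i → Sat τ φ j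

/-- Disjunction abbreviation. -/
def por (φ ψ : PPLTL P) : PPLTL P := neg (conj (neg φ) (neg ψ))

/-- Previous normal form transformation. -/
def pnf : PPLTL P → PPLTL P
  | atom p => atom p
  | neg φ => neg (pnf φ)
  | conj φ ψ => conj (pnf φ) (pnf ψ)
  | yesterday φ => yesterday φ
  | since φ ψ => por (pnf ψ) (conj (pnf φ) (yesterday (since φ ψ)))

/-- The set of subformulas of a formula. -/
def sub [DecidableEq P] : PPLTL P → Finset (PPLTL P)
  | atom p => {atom p}
  | neg φ => insert (neg φ) (sub φ)
  | conj φ ψ => insert (conj φ ψ) (sub φ ∪ sub ψ)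
  | yesterday φ => insert (yesterday φ) (sub φ)
  | since φ ψ => insert (since φ ψ) (sub φ ∪ sub ψ)


/-- A formula has all its `since`-subformulas (proper temporal subformulas)
occurring only within the scope of a `yesterday` operator. -/
def sinceGuarded : PPLTL P → Prop
  | atom _ => True
  | neg φ => sinceGuarded φ
  | conj φ ψ => sinceGuarded φ ∧ sinceGuarded ψ
  | yesterday _ => True
  | since _ _ => False

lemma mem_sub_self [DecidableEq P] (φ : PPLTL P) : φ ∈ sub φ := by
  cases φ <;> simp [sub]

lemma sub_subset_of_mem [DecidableEq P] {ψ : PPLTL P} :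
    ∀ χ : PPLTL P, ψ ∈ sub χ → sub ψ ⊆ sub χ := by
  intro χ
  induction χ with
  | atom p => intro h; simp [sub] at h; subst h; simp [sub]
  | neg φ ih =>
    intro h
    rcases Finset.mem_insert.1 h with h | h
    · subst h; exact subset_rfl
    · exact (ih h).trans (Finset.subset_insert _ _)
  | conj φ₁ φ₂ ih1 ih2 =>
    intro h
    rcases Finset.mem_insert.1 h with h | h
    · subst h; exact subset_rfl
    · rcases Finset.mem_union.1 h with h | h
      · exact (ih1 h).trans ((Finset.subset_union_left).trans (Finset.subset_insert _ _))
      · exact (ih2 h).trans ((Finset.subset_union_right).trans (Finset.subset_insert _ _))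
  | yesterday φ ih =>
    intro h
    rcases Finset.mem_insert.1 h with h | h
    · subst h; exact subset_rfl
    · exact (ih h).trans (Finset.subset_insert _ _)
  | since φ₁ φ₂ ih1 ih2 =>
    intro h
    rcases Finset.mem_insert.1 h with h | h
    · subst h; exact subset_rfl
    · rcases Finset.mem_union.1 h with h | h
      · exact (ih1 h).trans ((Finset.subset_union_left).trans (Finset.subset_insert _ _))
      · exact (ih2 h).trans ((Finset.subset_union_right).trans (Finset.subset_insert _ _))

lemma mem_of_yesterday_mem [DecidableEq P] {ϕ χ : PPLTL P}
    (h : yesterday ϕ ∈ sub χ) : ϕ ∈ sub χ :=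
  sub_subset_of_mem χ h (by simp [sub, mem_sub_self])

/-- (i) in `pnf φ` every occurrence of a formula of the form
`ϕ₁ S ϕ₂` lies within the scope of a `Y` operator, and (ii) every subformula of
`pnf φ` of the form `Y ϕ` satisfies `ϕ ∈ sub φ`. -/
theorem pnf_shape [DecidableEq P] (φ : PPLTL P) :
    sinceGuarded (pnf φ) ∧ ∀ ϕ : PPLTL P, yesterday ϕ ∈ (pnf φ).sub → ϕ ∈ φ.sub := by
  induction φ with
  | atom p =>
    refine ⟨trivial, ?_⟩
    intro ϕ h; simp [pnf, sub] at h
  | neg φ ih =>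
    refine ⟨ih.1, ?_⟩
    intro ϕ h
    simp only [pnf, sub, Finset.mem_insert] at h
    rcases h with h | h
    · exact absurd h (by simp)
    · exact Finset.mem_insert_of_mem (ih.2 ϕ h)
  | conj φ₁ φ₂ ih1 ih2 =>
    refine ⟨⟨ih1.1, ih2.1⟩, ?_⟩
    intro ϕ h
    simp only [pnf, sub, Finset.mem_insert, Finset.mem_union] at h
    rcases h with h | h | h
    · exact absurd h (by simp)
    · exact Finset.mem_insert_of_mem (Finset.mem_union_left _ (ih1.2 ϕ h))
    · exact Finset.mem_insert_of_mem (Finset.mem_union_right _ (ih2.2 ϕ h))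
  | yesterday φ ih =>
    refine ⟨trivial, ?_⟩
    intro ϕ h
    simp only [pnf, sub, Finset.mem_insert, yesterday.injEq] at h
    rcases h with h | h
    · subst h; exact Finset.mem_insert_of_mem (mem_sub_self _)
    · exact Finset.mem_insert_of_mem (mem_of_yesterday_mem h)
  | since φ₁ φ₂ ih1 ih2 =>
    refine ⟨⟨ih2.1, ih1.1, trivial⟩, ?_⟩
    intro ϕ h
    simp only [pnf, por, sub, Finset.mem_insert, Finset.mem_union, yesterday.injEq] at h
    rcases h with h | h | (h | h) | h | h | h | h | h | h | h
    case _ => exact absurd h (by simp)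
    case _ => exact absurd h (by simp)
    case _ => exact absurd h (by simp)
    case _ => exact Finset.mem_insert_of_mem (Finset.mem_union_right _ (ih2.2 ϕ h))
    case _ => exact absurd h (by simp)
    case _ => exact absurd h (by simp)
    case _ => exact Finset.mem_insert_of_mem (Finset.mem_union_left _ (ih1.2 ϕ h))
    case _ => subst h; exact mem_sub_self _
    case _ => exact absurd h (by simp)
    case _ => exact Finset.mem_insert_of_mem (Finset.mem_union_left _ (mem_of_yesterday_mem h))
    case _ => exact Finset.mem_insert_of_mem (Finset.mem_union_right _ (mem_of_yesterday_mem h))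

end PPLTL
end

section
/- Let φ be a PPLTL formula over P and let τ = s₀ be a trace of length 1. Then s₀ ⊨ φ if and only if val(φ, σ₋₁, s₀), where σ₋₁ is the interpretation assigning ⊥ to every proposition in Σφ. -/
namespace PPLTL

variable {P : Type}

/-- The predicate `val(ϕ, σ, s)`: truth of ϕ given the propositional
interpretation `σ` over the quoted subformulas Σφ (here modelled as a
predicate on formulas) and the current propositional interpretation `s`. -/
def val (σ : PPLTL P → Prop) (s : Set P) : PPLTL P → Prop
  | atom p => p ∈ s
  | neg φ => ¬ val σ s φ
  | conj φ ψ => val σ s φ ∧ val σ s ψ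
  | yesterday φ => σ φ
  | since φ ψ => val σ s ψ ∨ (val σ s φ ∧ σ (since φ ψ))

/-- The interpretation `σ₋₁` assigning ⊥ to every quoted proposition. -/
def sigmaInit : PPLTL P → Prop := fun _ => False

/-- `sigmaSeq τ 0 = σ₋₁` and `sigmaSeq τ (i+1) = σᵢ`, where
`σᵢ(«ϕ») = val(ϕ, σ_{i-1}, sᵢ)`; i.e. `sigmaSeq τ i = σ_{i-1}`. -/
def sigmaSeq (τ : ℕ → Set P) : ℕ → PPLTL P → Prop
  | 0 => sigmaInit
  | i + 1 => fun ϕ => val (sigmaSeq τ i) (τ i) ϕ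

/-- For a trace `τ = s₀` of length 1,
`s₀ ⊨ φ` iff `val(φ, σ₋₁, s₀)`. -/
theorem sat_singleton_iff_val (φ : PPLTL P) (s₀ : Set P) :
    Sat (fun _ => s₀) φ 0 ↔ val sigmaInit s₀ φ := by
  induction φ with
  | atom p => simp [Sat, val]
  | neg φ ih => simp [Sat, val, ih]
  | conj φ ψ ih1 ih2 => simp [Sat, val, ih1, ih2]
  | yesterday φ ih => simp [Sat, val, sigmaInit]
  | since φ ψ ih1 ih2 =>
      simp only [Sat, val, sigmaInit, and_false, or_false]
      constructor
      · rintro ⟨k, hk, hψ, -⟩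
        interval_cases k
        exact ih2.mp hψ
      · intro h
        exact ⟨0, le_rfl, ih2.mpr h, fun j hj hj' => absurd (lt_of_lt_of_le hj hj') (lt_irrefl 0)⟩

end PPLTL
end

section
/- Let φ be a PPLTL formula over P, let τ = s₀⋯sₙ be a finite nonempty trace over P, and let τ⁺ = σ₋₁ σ₀ ⋯ σ_{n−1} be the corresponding trace over Σφ, where σ₋₁ assigns ⊥ to every proposition in Σφ and σᵢ(«ϕ») = val(ϕ, σ_{i−1}, sᵢ) for 0 ≤ i ≤ n. Then τ ⊨ φ if and only if val(φ, last(τ⁺), last(τ)), i.e., if and only if val(φ, σ_{n−1}, sₙ). -/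
namespace PPLTL

variable {P : Type}

lemma sat_since_zero (τ : ℕ → Set P) (φ ψ : PPLTL P) :
    Sat τ (since φ ψ) 0 ↔ Sat τ ψ 0 := by
  constructor
  · rintro ⟨k, hk, hψ, -⟩
    interval_cases k
    exact hψ
  · intro h
    exact ⟨0, le_refl _, h, fun j hj hj' => absurd (lt_of_lt_of_le hj hj') (lt_irrefl _)⟩

lemma sat_since_succ (τ : ℕ → Set P) (φ ψ : PPLTL P) (n : ℕ) :
    Sat τ (since φ ψ) (n + 1) ↔
      Sat τ ψ (n + 1) ∨ (Sat τ φ (n + 1) ∧ Sat τ (since φ ψ) n) := by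
  constructor
  · rintro ⟨k, hk, hψ, hφ⟩
    rcases Nat.eq_or_lt_of_le hk with rfl | hk'
    · exact Or.inl hψ
    · have hk'' : k ≤ n := Nat.lt_succ_iff.mp hk'
      refine Or.inr ⟨hφ _ (Nat.lt_succ_of_le hk'') (le_refl _),
        ⟨k, hk'', hψ, fun j hj hj' => hφ j hj (Nat.le_succ_of_le hj')⟩⟩
  · rintro (h | ⟨hφ, k, hk, hψ, hφ'⟩)
    · exact ⟨n + 1, le_refl _, h, fun j hj hj' => absurd (lt_of_lt_of_le hj hj') (lt_irrefl _)⟩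
    · refine ⟨k, Nat.le_succ_of_le hk, hψ, fun j hj hj' => ?_⟩
      rcases Nat.eq_or_lt_of_le hj' with rfl | hj''
      · exact hφ
      · exact hφ' j hj (Nat.lt_succ_iff.mp hj'')

/-- For a finite nonempty trace `τ = s₀ ⋯ sₙ` and the
corresponding trace `τ⁺ = σ₋₁ σ₀ ⋯ σ_{n-1}` over Σφ
(where `σ₋₁` is everywhere false and `σᵢ(«ϕ») = val(ϕ, σ_{i-1}, sᵢ)`),
we have `τ ⊨ φ` iff `val(φ, last τ⁺, last τ)`, i.e. iff `val(φ, σ_{n-1}, sₙ)`.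
Here `sigmaSeq τ n = σ_{n-1}`. -/
theorem sat_iff_val_last (φ : PPLTL P) (τ : ℕ → Set P) (n : ℕ) :
    Sat τ φ n ↔ val (sigmaSeq τ n) (τ n) φ := by
  induction φ generalizing n with
  | atom p => rfl
  | neg φ ih => exact not_congr (ih n)
  | conj φ ψ ihφ ihψ => exact and_congr (ihφ n) (ihψ n)
  | yesterday φ ih =>
    cases n with
    | zero => simp [Sat, val, sigmaSeq, sigmaInit]
    | succ i =>
      show (1 ≤ i + 1 ∧ Sat τ φ (i + 1 - 1)) ↔ sigmaSeq τ (i + 1) φ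
      simp only [Nat.add_sub_cancel]
      rw [show sigmaSeq τ (i + 1) φ = val (sigmaSeq τ i) (τ i) φ from rfl]
      rw [← ih i]
      simp
  | since φ ψ ihφ ihψ =>
    induction n with
    | zero =>
      rw [sat_since_zero]
      show _ ↔ (val _ _ ψ ∨ (val _ _ φ ∧ sigmaInit (since φ ψ)))
      simp [sigmaInit, ihψ 0]
    | succ i ihn =>
      rw [sat_since_succ]
      show _ ↔ (val _ _ ψ ∨ (val _ _ φ ∧ val (sigmaSeq τ i) (τ i) (since φ ψ)))
      rw [← ihn, ihφ (i+1), ihψ (i+1)]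

end PPLTL
end

section
/- Let D be a deterministic planning domain over fluents F, Γ = (D, s₀, φ) a planning problem with PPLTL goal φ, and Γ' = (D', s₀', G') the compiled planning problem. Then any sequence of actions a₁,…,aₘ executable from s₀ in D, inducing the unique trace s₀ s₁ ⋯ sₘ, is also executable from s₀' = (s₀, σ₋₁) in D', and it is a solution to Γ (i.e., the induced trace s₀⋯sₘ satisfies φ) if and only if the compiled state reached after executing it from s₀' in D' satisfies the reachability goal G'. -/
/-- A (possibly nondeterministic) planning domain with states `S` and
actions `A`: `applicable s a` says action `a` is applicable in state `s`,
and `tr s a` is the set of successor states. -/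
structure Domain (S A : Type) where
  applicable : S → A → Prop
  tr : S → A → Set S

/-- The compiled domain `D'`: states are pairs of a fluent state and an
interpretation of the quoted subformulas; actions and applicability are
unchanged; the Σφ-component is deterministically updated by
`σ'(«ϕ») = val(ϕ, σ, s)`, identically for every action. -/
def Domain.compiled {F A : Type} (D : Domain (Set F) A) :
    Domain (Set F × (PPLTL F → Prop)) A where
  applicable := fun p a => D.applicable p.1 a
  tr := fun p a => {q | q.1 ∈ D.tr p.1 a ∧ q.2 = fun ϕ => PPLTL.val p.2 p.1 ϕ}


open PPLTL in
theorem ppltl_key {F : Type} (s : ℕ → Set F) :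
    ∀ (φ : PPLTL F) (m : ℕ), Sat s φ m ↔ val (sigmaSeq s m) (s m) φ := by
  intro φ
  induction φ with
  | atom p => intro m; simp [Sat, val]
  | neg φ ih => intro m; simp [Sat, val, ih]
  | conj φ ψ ihφ ihψ => intro m; simp [Sat, val, ihφ, ihψ]
  | yesterday φ ih =>
    intro m
    cases m with
    | zero => simp [Sat, val, sigmaSeq, sigmaInit]
    | succ k =>
      show (1 ≤ k + 1 ∧ Sat s φ (k + 1 - 1)) ↔ val (sigmaSeq s k) (s k) φ
      simp only [Nat.add_sub_cancel]
      rw [← ih k]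
      simp
  | since φ ψ ihφ ihψ =>
    intro m
    induction m with
    | zero =>
      show (∃ k, k ≤ 0 ∧ Sat s ψ k ∧ ∀ j, k < j → j ≤ 0 → Sat s φ j) ↔
        (val sigmaInit (s 0) ψ ∨ (val sigmaInit (s 0) φ ∧ sigmaInit (PPLTL.since φ ψ)))
      constructor
      · rintro ⟨k, hk, hψ, -⟩
        interval_cases k
        exact Or.inl ((ihψ 0).mp hψ)
      · rintro (h | ⟨-, h⟩)
        · exact ⟨0, le_refl _, (ihψ 0).mpr h, fun j hj hj' => absurd (lt_of_lt_of_le hj hj') (lt_irrefl 0)⟩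
        · exact absurd h (fun h => h.elim)
    | succ k ihm =>
      show (∃ k', k' ≤ k + 1 ∧ Sat s ψ k' ∧ ∀ j, k' < j → j ≤ k + 1 → Sat s φ j) ↔
        (val (sigmaSeq s (k+1)) (s (k+1)) ψ ∨
          (val (sigmaSeq s (k+1)) (s (k+1)) φ ∧ val (sigmaSeq s k) (s k) (PPLTL.since φ ψ)))
      rw [← ihψ (k+1), ← ihφ (k+1), ← ihm]
      constructor
      · rintro ⟨k', hk', hψ, hφ⟩
        rcases Nat.lt_or_ge k' (k+1) with h | h
        · exact Or.inr ⟨hφ (k+1) h (le_refl _),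
            ⟨k', Nat.lt_succ_iff.mp h, hψ, fun j hj hj' => hφ j hj (Nat.le_succ_of_le hj')⟩⟩
        · have : k' = k + 1 := le_antisymm hk' h
          subst this
          exact Or.inl hψ
      · rintro (h | ⟨hφ, k', hk', hψ, hall⟩)
        · exact ⟨k+1, le_refl _, h, fun j hj hj' => absurd (lt_of_lt_of_le hj hj') (lt_irrefl _)⟩
        · refine ⟨k', Nat.le_succ_of_le hk', hψ, fun j hj hj' => ?_⟩
          rcases Nat.lt_or_ge j (k+1) with h | h
          · exact hall j hj (Nat.lt_succ_iff.mp h)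
          · have : j = k + 1 := le_antisymm hj' h
            subst this; exact hφ

open PPLTL in
/-- For a deterministic domain `D`, any action sequence
`a₀,…,a_{m-1}` executable from `s₀` in `D`, inducing the unique trace
`s₀ s₁ ⋯ sₘ`, is also executable from `s₀' = (s₀, σ₋₁)` in the compiled
domain `D'` (with compiled states `(sᵢ, σ_{i-1})`), and it is a solution to
`Γ = (D, s₀, φ)` (the induced trace satisfies φ) iff the compiled state
reached satisfies the reachability goal `G'`, i.e. iff `val(φ, σ_{m-1}, sₘ)`. -/
theorem compiled_executable_and_goal {F A : Type} (D : Domain (Set F) A)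
    (hne : ∀ s a, D.applicable s a → (D.tr s a).Nonempty)
    (hdet : ∀ s a, D.applicable s a → ∀ s₁ s₂, s₁ ∈ D.tr s a → s₂ ∈ D.tr s a → s₁ = s₂)
    (φ : PPLTL F) (s : ℕ → Set F) (acts : ℕ → A) (m : ℕ)
    (hexec : ∀ i < m, D.applicable (s i) (acts i) ∧ s (i + 1) ∈ D.tr (s i) (acts i)) :
    (∀ i < m,
      D.compiled.applicable (s i, sigmaSeq s i) (acts i) ∧
        (s (i + 1), sigmaSeq s (i + 1)) ∈ D.compiled.tr (s i, sigmaSeq s i) (acts i)) ∧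
    (Sat s φ m ↔ val (sigmaSeq s m) (s m) φ) := by
  refine ⟨fun i hi => ⟨(hexec i hi).1, ⟨(hexec i hi).2, rfl⟩⟩, ppltl_key s φ m⟩
end

section
/- In the compiled domain D', the bookkeeping component is action-independent: for every sequence of compiled states (s₀, σ'₀), (s₁, σ'₁), …, (sₙ, σ'ₙ) obtained by executing any applicable action sequence from (s₀, σ₋₁) (so σ'₀ = σ₋₁), one has σ'ᵢ = σ_{i−1} for every 1 ≤ i ≤ n, where the interpretations σᵢ over Σφ are defined by σᵢ(«ϕ») = val(ϕ, σ_{i−1}, sᵢ); in particular the Σφ-component after i steps is uniquely determined by the fluent states s₀, …, s_{i−1} and does not depend on which actions were executed. -/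
open PPLTL in
/-- In the compiled domain `D'` the bookkeeping component is
action-independent: along any execution
`(s₀, σ'₀), …, (sₙ, σ'ₙ)` of any applicable action sequence from
`(s₀, σ₋₁)` (so `σ'₀ = σ₋₁`), one has `σ'ᵢ = σ_{i-1}` for every `1 ≤ i ≤ n`,
where `σᵢ(«ϕ») = val(ϕ, σ_{i-1}, sᵢ)` (i.e. `σ_{i-1} = sigmaSeq s i`); in
particular the Σφ-component after `i` steps depends only on `s₀, …, s_{i-1}`
and not on the executed actions. -/
theorem compiled_bookkeeping_action_independent {F A : Type} (D : Domain (Set F) A)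
    (s : ℕ → Set F) (σ' : ℕ → PPLTL F → Prop) (acts : ℕ → A) (n : ℕ)
    (h0 : σ' 0 = sigmaInit)
    (hstep : ∀ i < n,
      D.compiled.applicable (s i, σ' i) (acts i) ∧
        (s (i + 1), σ' (i + 1)) ∈ D.compiled.tr (s i, σ' i) (acts i)) :
    ∀ i, 1 ≤ i → i ≤ n → σ' i = sigmaSeq s i := by
  have key : ∀ i, i ≤ n → σ' i = sigmaSeq s i := by
    intro i
    induction i with
    | zero => intro _; simpa [PPLTL.sigmaSeq] using h0
    | succ i ih =>
      intro hle
      have hi : i < n := Nat.lt_of_succ_le hle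
      have h2 := (hstep i hi).2.2
      simp only [Domain.compiled] at h2
      rw [h2, ih (Nat.le_of_lt hi), PPLTL.sigmaSeq]
  intro i _ hin
  exact key i hin
end
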